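/- Suppose for every λ ∈ ℂ the function F₊(·,λ) : ℝ → ℂ^{N×N} is twice continuously differentiable on [0,1] and satisfies −F'' + V(x)F = λF on [0,1] with F₊(1,λ) = T₊^⊥ and F₊'(1,λ) = T₊ − bT₊^⊥. Then for every λ ∈ ℂ: (Γ₋°F₊(·,conj λ))ᴴ·(Γ₋F₊(·,λ)) = (Γ₋F₊(·,conj λ))ᴴ·(Γ₋°F₊(·,λ)). Consequently, whenever the matrices Γ₋F₊(·,λ) and Γ₋F₊(·,conj λ) are invertible, the Weyl–Titchmarsh function m(λ) = −(Γ₋°F₊(·,λ))·(Γ₋F₊(·,λ))⁻¹ satisfies m(conj λ) = m(λ)ᴴ. -/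

import Mathlib

open Matrix Set

lemma boundary_algebra {N : ℕ} (Tm a u u' v v' : Matrix (Fin N) (Fin N) ℂ)
    (hTmH : Tmᴴ = Tm) (hTm2 : Tm * Tm = Tm) (haH : aᴴ = a)
    (ha : a = (1 - Tm) * a * (1 - Tm))
    (hW : vᴴ * u' = v'ᴴ * u) :
    ((1 - Tm) * v + Tm * v')ᴴ * ((1 - Tm) * (u' - a * u) - Tm * u)
      = ((1 - Tm) * (v' - a * v) - Tm * v)ᴴ * ((1 - Tm) * u + Tm * u') := by
  have hPT : (1 - Tm) * Tm = 0 := by rw [sub_mul, one_mul, hTm2, sub_self]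
  have hTP : Tm * (1 - Tm) = 0 := by rw [mul_sub, mul_one, hTm2, sub_self]
  have hPP : (1 - Tm) * (1 - Tm) = 1 - Tm := by rw [mul_sub, mul_one, hPT, sub_zero]
  have hPa : (1 - Tm) * a = a := by
    conv_lhs => rw [ha]
    rw [← mul_assoc, ← mul_assoc, hPP, ← ha]
  have haP : a * (1 - Tm) = a := by
    conv_lhs => rw [ha]
    rw [mul_assoc, hPP, ← ha]
  have hTa : Tm * a = 0 := by
    conv_lhs => rw [ha]
    rw [← mul_assoc, ← mul_assoc, hTP, zero_mul, zero_mul]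
  have haT : a * Tm = 0 := by
    conv_lhs => rw [ha]
    rw [mul_assoc, hPT, mul_zero]
  have f1 : ∀ X : Matrix (Fin N) (Fin N) ℂ, (1 - Tm) * (Tm * X) = 0 := fun X => by
    rw [← mul_assoc, hPT, zero_mul]
  have f2 : ∀ X : Matrix (Fin N) (Fin N) ℂ, Tm * ((1 - Tm) * X) = 0 := fun X => by
    rw [← mul_assoc, hTP, zero_mul]
  have f3 : ∀ X : Matrix (Fin N) (Fin N) ℂ, (1 - Tm) * ((1 - Tm) * X) = (1 - Tm) * X := fun X => by
    rw [← mul_assoc, hPP]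
  have f4 : ∀ X : Matrix (Fin N) (Fin N) ℂ, Tm * (Tm * X) = Tm * X := fun X => by
    rw [← mul_assoc, hTm2]
  have f5 : ∀ X : Matrix (Fin N) (Fin N) ℂ, (1 - Tm) * (a * X) = a * X := fun X => by
    rw [← mul_assoc, hPa]
  have f6 : ∀ X : Matrix (Fin N) (Fin N) ℂ, Tm * (a * X) = 0 := fun X => by
    rw [← mul_assoc, hTa, zero_mul]
  have f7 : ∀ X : Matrix (Fin N) (Fin N) ℂ, a * ((1 - Tm) * X) = a * X := fun X => by
    rw [← mul_assoc, haP]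
  have f8 : ∀ X : Matrix (Fin N) (Fin N) ℂ, a * (Tm * X) = 0 := fun X => by
    rw [← mul_assoc, haT, zero_mul]
  simp only [conjTranspose_add, conjTranspose_sub, conjTranspose_mul, conjTranspose_one,
    hTmH, haH, add_mul, sub_mul, mul_sub, mul_add, mul_assoc, f1, f2, f3, f4, f5, f6, f7, f8,
    mul_zero, zero_mul, sub_zero, zero_sub, add_zero, zero_add, mul_one, one_mul]
  rw [hW]
  abel

lemma wronskian_zero {N : ℕ} (Tp b : Matrix (Fin N) (Fin N) ℂ)
    (hTpH : Tpᴴ = Tp) (hTp2 : Tp * Tp = Tp)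
    (hbH : bᴴ = b)
    (V : ℝ → Matrix (Fin N) (Fin N) ℂ)
    (hVh : ∀ x ∈ Icc (0:ℝ) 1, (V x)ᴴ = V x)
    (Fp Fp' Fp'' : ℝ → ℂ → Matrix (Fin N) (Fin N) ℂ)
    (hFp' : ∀ lam : ℂ, ∀ x ∈ Icc (0:ℝ) 1, ∀ i j,
      HasDerivAt (fun t => Fp t lam i j) (Fp' x lam i j) x)
    (hFp'' : ∀ lam : ℂ, ∀ x ∈ Icc (0:ℝ) 1, ∀ i j,
      HasDerivAt (fun t => Fp' t lam i j) (Fp'' x lam i j) x)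
    (hFpeq : ∀ lam : ℂ, ∀ x ∈ Icc (0:ℝ) 1,
      -Fp'' x lam + V x * Fp x lam = lam • Fp x lam)
    (hFp1 : ∀ lam : ℂ, Fp 1 lam = 1 - Tp)
    (hFp'1 : ∀ lam : ℂ, Fp' 1 lam = Tp - b * (1 - Tp)) (lam : ℂ) :
    (Fp 0 ((starRingEnd ℂ) lam))ᴴ * Fp' 0 lam - (Fp' 0 ((starRingEnd ℂ) lam))ᴴ * Fp 0 lam = 0 := by
  set lam' := (starRingEnd ℂ) lam with hlam'
  have hstar : star lam' = lam := by simp [hlam']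
  have hode : ∀ mu : ℂ, ∀ x ∈ Icc (0:ℝ) 1, Fp'' x mu = V x * Fp x mu - mu • Fp x mu := by
    intro mu x hx
    have h := hFpeq mu x hx
    rw [← h]; abel
  have hM : ∀ x ∈ Icc (0:ℝ) 1,
      (Fp x lam')ᴴ * Fp'' x lam - (Fp'' x lam')ᴴ * Fp x lam = 0 := by
    intro x hx
    rw [hode lam x hx, hode lam' x hx]
    rw [conjTranspose_sub, conjTranspose_mul, conjTranspose_smul, hVh x hx, hstar]
    rw [Matrix.mul_sub, Matrix.sub_mul, Matrix.smul_mul, Matrix.mul_smul, ← mul_assoc]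
    abel
  have key : ∀ i j, ((Fp 1 lam')ᴴ * Fp' 1 lam - (Fp' 1 lam')ᴴ * Fp 1 lam) i j
      = ((Fp 0 lam')ᴴ * Fp' 0 lam - (Fp' 0 lam')ᴴ * Fp 0 lam) i j := by
    intro i j
    set f : ℝ → ℂ := fun x => ∑ k,
      (star (Fp x lam' k i) * Fp' x lam k j - star (Fp' x lam' k i) * Fp x lam k j) with hf
    have hentry : ∀ x : ℝ, ((Fp x lam')ᴴ * Fp' x lam - (Fp' x lam')ᴴ * Fp x lam) i j = f x := by
      intro x
      simp [hf, Matrix.sub_apply, Matrix.mul_apply, Matrix.conjTranspose_apply,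
        Finset.sum_sub_distrib]
    have hderiv0 : ∀ x ∈ Icc (0:ℝ) 1, HasDerivAt f 0 x := by
      intro x hx
      have h1 : HasDerivAt f (∑ k,
          ((star (Fp' x lam' k i) * Fp' x lam k j + star (Fp x lam' k i) * Fp'' x lam k j)
            - (star (Fp'' x lam' k i) * Fp x lam k j + star (Fp' x lam' k i) * Fp' x lam k j))) x := by
        apply HasDerivAt.fun_sum
        intro k _
        exact (((hFp' lam' x hx k i).star.mul (hFp'' lam x hx k j)).sub
          (((hFp'' lam' x hx k i).star.mul (hFp' lam x hx k j))))
      have h2 : (∑ k,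
          ((star (Fp' x lam' k i) * Fp' x lam k j + star (Fp x lam' k i) * Fp'' x lam k j)
            - (star (Fp'' x lam' k i) * Fp x lam k j + star (Fp' x lam' k i) * Fp' x lam k j)))
          = ((Fp x lam')ᴴ * Fp'' x lam - (Fp'' x lam')ᴴ * Fp x lam) i j := by
        rw [Matrix.sub_apply, Matrix.mul_apply, Matrix.mul_apply, ← Finset.sum_sub_distrib]
        refine Finset.sum_congr rfl fun k _ => ?_
        rw [Matrix.conjTranspose_apply, Matrix.conjTranspose_apply]
        ring
      rw [h2, hM x hx] at h1
      simpa using h1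
    have hcont : ContinuousOn f (Icc (0:ℝ) 1) := fun x hx =>
      ((hderiv0 x hx).continuousAt).continuousWithinAt
    have := constant_of_has_deriv_right_zero hcont
      (fun x hx => ((hderiv0 x (Ico_subset_Icc_self hx)).hasDerivWithinAt)) 1 (by norm_num)
    rw [hentry, hentry, this]
  have hW : (Fp 0 lam')ᴴ * Fp' 0 lam - (Fp' 0 lam')ᴴ * Fp 0 lam
      = (Fp 1 lam')ᴴ * Fp' 1 lam - (Fp' 1 lam')ᴴ * Fp 1 lam := by
    ext i j; exact (key i j).symm
  rw [hW, hFp1, hFp'1, hFp1, hFp'1]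
  have hPT : (1 - Tp) * Tp = 0 := by rw [sub_mul, one_mul, hTp2, sub_self]
  have hTP : Tp * (1 - Tp) = 0 := by rw [mul_sub, mul_one, hTp2, sub_self]
  simp only [conjTranspose_sub, conjTranspose_mul, conjTranspose_one, hTpH, hbH]
  simp only [mul_sub, sub_mul, hPT, hTP, mul_assoc, one_mul, hTp2, zero_sub, sub_self, mul_one]
  abel
/-- For the family `F₊(·,λ)` of fundamental solutions normalized at `x = 1`,
one has `(Γ₋°F₊(·,conj λ))ᴴ (Γ₋F₊(·,λ)) = (Γ₋F₊(·,conj λ))ᴴ (Γ₋°F₊(·,λ))`; hence the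
Weyl–Titchmarsh function `m(λ) = -(Γ₋°F₊(·,λ))(Γ₋F₊(·,λ))⁻¹` satisfies `m(conj λ) = m(λ)ᴴ`
whenever the relevant matrices are invertible. -/
theorem weyl_titchmarsh_symmetry {N : ℕ} (hN : 1 ≤ N)
    (Tm Tp a b : Matrix (Fin N) (Fin N) ℂ)
    (hTmH : Tmᴴ = Tm) (hTm2 : Tm * Tm = Tm) (hTpH : Tpᴴ = Tp) (hTp2 : Tp * Tp = Tp)
    (haH : aᴴ = a) (ha : a = (1 - Tm) * a * (1 - Tm))
    (hbH : bᴴ = b) (hb : b = (1 - Tp) * b * (1 - Tp))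
    (V : ℝ → Matrix (Fin N) (Fin N) ℂ)
    (hVc : ∀ i j, Continuous fun x => V x i j)
    (hVh : ∀ x ∈ Icc (0:ℝ) 1, (V x)ᴴ = V x)
    (Fp Fp' Fp'' : ℝ → ℂ → Matrix (Fin N) (Fin N) ℂ)
    (hFp' : ∀ lam : ℂ, ∀ x ∈ Icc (0:ℝ) 1, ∀ i j,
      HasDerivAt (fun t => Fp t lam i j) (Fp' x lam i j) x)
    (hFp'' : ∀ lam : ℂ, ∀ x ∈ Icc (0:ℝ) 1, ∀ i j,
      HasDerivAt (fun t => Fp' t lam i j) (Fp'' x lam i j) x)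
    (hFp''c : ∀ lam : ℂ, ∀ i j, ContinuousOn (fun x => Fp'' x lam i j) (Icc (0:ℝ) 1))
    (hFpeq : ∀ lam : ℂ, ∀ x ∈ Icc (0:ℝ) 1,
      -Fp'' x lam + V x * Fp x lam = lam • Fp x lam)
    (hFp1 : ∀ lam : ℂ, Fp 1 lam = 1 - Tp)
    (hFp'1 : ∀ lam : ℂ, Fp' 1 lam = Tp - b * (1 - Tp)) :
    ∀ lam : ℂ,
      (((1 - Tm) * Fp 0 ((starRingEnd ℂ) lam) + Tm * Fp' 0 ((starRingEnd ℂ) lam))ᴴ *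
          ((1 - Tm) * (Fp' 0 lam - a * Fp 0 lam) - Tm * Fp 0 lam) =
        ((1 - Tm) * (Fp' 0 ((starRingEnd ℂ) lam) - a * Fp 0 ((starRingEnd ℂ) lam)) -
            Tm * Fp 0 ((starRingEnd ℂ) lam))ᴴ *
          ((1 - Tm) * Fp 0 lam + Tm * Fp' 0 lam)) ∧
      (IsUnit ((1 - Tm) * (Fp' 0 lam - a * Fp 0 lam) - Tm * Fp 0 lam) →
        IsUnit ((1 - Tm) * (Fp' 0 ((starRingEnd ℂ) lam) - a * Fp 0 ((starRingEnd ℂ) lam)) -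
          Tm * Fp 0 ((starRingEnd ℂ) lam)) →
        -(((1 - Tm) * Fp 0 ((starRingEnd ℂ) lam) + Tm * Fp' 0 ((starRingEnd ℂ) lam)) *
            ((1 - Tm) * (Fp' 0 ((starRingEnd ℂ) lam) - a * Fp 0 ((starRingEnd ℂ) lam)) -
              Tm * Fp 0 ((starRingEnd ℂ) lam))⁻¹) =
          (-(((1 - Tm) * Fp 0 lam + Tm * Fp' 0 lam) *
            ((1 - Tm) * (Fp' 0 lam - a * Fp 0 lam) - Tm * Fp 0 lam)⁻¹))ᴴ) := by
  intro lam
  have hWz := wronskian_zero Tp b hTpH hTp2 hbH V hVh Fp Fp' Fp'' hFp' hFp'' hFpeq hFp1 hFp'1 lam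
  have hW : (Fp 0 ((starRingEnd ℂ) lam))ᴴ * Fp' 0 lam
      = (Fp' 0 ((starRingEnd ℂ) lam))ᴴ * Fp 0 lam := sub_eq_zero.mp hWz
  have hmain := boundary_algebra Tm a (Fp 0 lam) (Fp' 0 lam)
    (Fp 0 ((starRingEnd ℂ) lam)) (Fp' 0 ((starRingEnd ℂ) lam)) hTmH hTm2 haH ha hW
  refine ⟨hmain, ?_⟩
  intro hU hU'
  set A := (1 - Tm) * Fp 0 lam + Tm * Fp' 0 lam with hA
  set B := (1 - Tm) * (Fp' 0 lam - a * Fp 0 lam) - Tm * Fp 0 lam with hB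
  set A' := (1 - Tm) * Fp 0 ((starRingEnd ℂ) lam) + Tm * Fp' 0 ((starRingEnd ℂ) lam) with hA'
  set B' := (1 - Tm) * (Fp' 0 ((starRingEnd ℂ) lam) - a * Fp 0 ((starRingEnd ℂ) lam))
      - Tm * Fp 0 ((starRingEnd ℂ) lam) with hB'
  have E : A'ᴴ * B = B'ᴴ * A := hmain
  have hUB : IsUnit B.det := (Matrix.isUnit_iff_isUnit_det B).mp hU
  have hUB' : IsUnit B'.det := (Matrix.isUnit_iff_isUnit_det B').mp hU'
  have hUBH : IsUnit (Bᴴ).det := by rw [Matrix.det_conjTranspose]; exact hUB.star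
  have e2 : Bᴴ * A' = Aᴴ * B' := by
    calc Bᴴ * A' = (A'ᴴ * B)ᴴ := by rw [conjTranspose_mul, conjTranspose_conjTranspose]
    _ = (B'ᴴ * A)ᴴ := by rw [E]
    _ = Aᴴ * B' := by rw [conjTranspose_mul, conjTranspose_conjTranspose]
  have e3 : A' * B'⁻¹ = (Bᴴ)⁻¹ * Aᴴ := by
    calc A' * B'⁻¹ = (Bᴴ)⁻¹ * (Bᴴ * (A' * B'⁻¹)) := by
          rw [← mul_assoc, Matrix.nonsing_inv_mul _ hUBH, one_mul]
    _ = (Bᴴ)⁻¹ * ((Bᴴ * A') * B'⁻¹) := by rw [mul_assoc]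
    _ = (Bᴴ)⁻¹ * (Aᴴ * (B' * B'⁻¹)) := by rw [e2, mul_assoc]
    _ = (Bᴴ)⁻¹ * Aᴴ := by rw [Matrix.mul_nonsing_inv _ hUB', mul_one]
  rw [conjTranspose_neg, conjTranspose_mul, Matrix.conjTranspose_nonsing_inv, e3]
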